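/- Let C be a nonempty closed convex subset of Euclidean space ℝ^N, and let ℋ be the set of all pairs (c, b) ∈ ℝ^N × ℝ with ‖c‖₂ = 1 such that C ⊆ {x : c·x + b ≥ 0}. For ε ≥ 0 define C(ε) = ∩_{(c,b)∈ℋ} {x : c·x + b ≥ −ε}. Then the Hausdorff distance between C and C(ε) is at most ε. -/

import Mathlib

open Metric Set RealInnerProductSpace

/-- a closed convex set and the intersection of the `ε`-relaxations of all its
supporting half-spaces (with unit normals) are at Hausdorff distance at most `ε`
(Lemma `lem::convex_bound`). -/
theorem convex_halfspace_relaxation {N : ℕ}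
    (C : Set (EuclideanSpace ℝ (Fin N))) (hne : C.Nonempty)
    (hclosed : IsClosed C) (hconv : Convex ℝ C)
    (ε : ℝ) (hε : 0 ≤ ε) :
    hausdorffDist C
      (⋂ cb ∈ {cb : EuclideanSpace ℝ (Fin N) × ℝ |
          ‖cb.1‖ = 1 ∧ C ⊆ {x | 0 ≤ inner ℝ cb.1 x + cb.2}},
        {x | -ε ≤ (inner ℝ cb.1 x : ℝ) + cb.2}) ≤ ε := by
  set Cε := (⋂ cb ∈ {cb : EuclideanSpace ℝ (Fin N) × ℝ |
          ‖cb.1‖ = 1 ∧ C ⊆ {x | 0 ≤ inner ℝ cb.1 x + cb.2}},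
        {x | -ε ≤ (inner ℝ cb.1 x : ℝ) + cb.2}) with hCε
  have hsub : C ⊆ Cε := by
    intro x hx
    rw [hCε]
    refine mem_iInter₂.2 fun cb hcb => ?_
    have := hcb.2 hx
    simp only [mem_setOf_eq] at this ⊢
    linarith
  apply hausdorffDist_le_of_infDist hε
  · intro x hx
    calc infDist x Cε ≤ dist x x := infDist_le_dist_of_mem (hsub hx)
    _ ≤ ε := by simpa using hε
  · intro x hx
    by_cases hxC : x ∈ C
    · calc infDist x C ≤ dist x x := infDist_le_dist_of_mem hxC
      _ ≤ ε := by simpa using hε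
    · obtain ⟨p, hpC, hpd⟩ := hclosed.exists_infDist_eq_dist hne x
      have hd : ‖x - p‖ = ⨅ w : C, ‖x - w‖ := by
        rw [← dist_eq_norm, ← hpd, infDist_eq_iInf]
        simp only [dist_eq_norm]
      have hproj : ∀ w ∈ C, (inner ℝ (x - p) (w - p) : ℝ) ≤ 0 :=
        (norm_eq_iInf_iff_real_inner_le_zero hconv hpC).1 hd
      have hxp : x - p ≠ 0 := sub_ne_zero.2 fun h => hxC (h ▸ hpC)
      have hnorm : (0:ℝ) < ‖x - p‖ := norm_pos_iff.2 hxp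
      set c : EuclideanSpace ℝ (Fin N) := (‖x - p‖)⁻¹ • (p - x) with hc
      have hcnorm : ‖c‖ = 1 := by
        rw [hc, norm_smul, norm_inv, Real.norm_eq_abs, abs_of_pos hnorm,
          ← neg_sub x p, norm_neg, inv_mul_cancel₀ hnorm.ne']
      set b : ℝ := -(inner ℝ (c) (p) : ℝ) with hb
      have hkey : ∀ w : EuclideanSpace ℝ (Fin N),
          (inner ℝ (c) (w) : ℝ) + b = -(‖x - p‖)⁻¹ * (inner ℝ (x - p) (w - p) : ℝ) := by
        intro w
        rw [hb, hc]
        rw [real_inner_smul_left, real_inner_smul_left]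
        rw [← neg_sub x p, inner_neg_left, inner_neg_left, inner_sub_right]
        ring
      have hmem : (c, b) ∈ {cb : EuclideanSpace ℝ (Fin N) × ℝ |
          ‖cb.1‖ = 1 ∧ C ⊆ {x | 0 ≤ inner ℝ cb.1 x + cb.2}} := by
        refine ⟨hcnorm, fun w hw => ?_⟩
        have := hproj w hw
        simp only [mem_setOf_eq, hkey w]
        have hinv : (0:ℝ) ≤ (‖x - p‖)⁻¹ := by positivity
        nlinarith
      have hxε : -ε ≤ (inner ℝ (c) (x) : ℝ) + b := by
        have := mem_iInter₂.1 (hCε ▸ hx) (c, b) hmem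
        simpa using this
      rw [hkey x] at hxε
      have hxx : (inner ℝ (x - p) (x - p) : ℝ) = ‖x - p‖ ^ 2 := real_inner_self_eq_norm_sq _
      rw [hxx] at hxε
      have heq : -‖x - p‖⁻¹ * ‖x - p‖ ^ 2 = -‖x - p‖ := by
        field_simp
      have hle : ‖x - p‖ ≤ ε := by rw [heq] at hxε; linarith
      rw [hpd, dist_eq_norm]
      exact hle
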